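/- arXiv:1908.07019 — 2 statements merged into one kernel-verified Lean document; each statement's English description precedes it below -/
import Mathlib

section
/- Let (r,a,c) and (s,b,d) be two rank one data, and set C^1_{≤1} := {(h_i) ∈ C^1 : u^{max(0, r_i + s_i − e')} divides h_i in F[[u]] for every i}. Then the image of C^1_{≤1} in coker ∂ has F-dimension equal to dim_F ker ∂ + Σ_{i=0}^{f−1} #{ j ∈ Z : max(0, r_i + s_i − e') ≤ j < r_i and j ≡ r_i + c_i − d_i (mod m) }. (In the paper's formulation, this image is the subspace of Ext^1(M(r,a,c), M(s,b,d)) consisting of extensions of height at most 1.) -/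
open PowerSeries

noncomputable section

/-- The map `φ : Σ αₙ uⁿ ↦ Σ αₙ u^{p·n}` on `F⟦u⟧`. -/
noncomputable def phiPS (p : ℕ) (F : Type) [CommRing F] :
    PowerSeries F →ₗ[F] PowerSeries F where
  toFun g := PowerSeries.mk fun n => if p ∣ n then PowerSeries.coeff (R := F) (n / p) g else 0
  map_add' g h := by
    ext n
    by_cases hn : p ∣ n <;> simp [PowerSeries.coeff_mk, hn]
  map_smul' t g := by
    ext n
    by_cases hn : p ∣ n <;> simp [PowerSeries.coeff_mk, hn]

/-- The space of tuples `(μ_i)_{i ∈ ℤ/f}` of power series such that every nonzero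
coefficient of `μ_i` occurs in a degree `n` with `n ≡ γ i (mod m)`. -/
def Ctuples (F : Type) [Field F] (f m : ℕ) (γ : ZMod f → ZMod m) :
    Submodule F (ZMod f → PowerSeries F) where
  carrier := {μ | ∀ (i : ZMod f) (n : ℕ), PowerSeries.coeff (R := F) n (μ i) ≠ 0 → (n : ZMod m) = γ i}
  add_mem' := by
    intro μ ν hμ hν i n hn
    rw [Pi.add_apply, map_add] at hn
    by_cases h1 : PowerSeries.coeff (R := F) n (μ i) = 0
    · refine hν i n fun h2 => hn ?_
      rw [h1, h2, add_zero]
    · exact hμ i n h1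
  zero_mem' := by
    intro i n hn
    simp at hn
  smul_mem' := by
    intro t μ hμ i n hn
    refine hμ i n fun h => hn ?_
    rw [Pi.smul_apply, map_smul, h, smul_zero]

/-- The map `∂ : (μ_i)_i ↦ (−a_i u^{r_i} μ_i + b_i u^{s_i} φ(μ_{i−1}))_i`. -/
noncomputable def Dmap (p : ℕ) (F : Type) [Field F] (f : ℕ) (r s : ZMod f → ℕ)
    (a b : ZMod f → Fˣ) :
    (ZMod f → PowerSeries F) →ₗ[F] (ZMod f → PowerSeries F) :=
  LinearMap.pi fun i =>
    (LinearMap.mulLeft F (PowerSeries.C (R := F) (b i : F) * PowerSeries.X ^ s i)).comp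
        ((phiPS p F).comp (LinearMap.proj (i - 1)))
      - (LinearMap.mulLeft F (PowerSeries.C (R := F) (a i : F) * PowerSeries.X ^ r i)).comp
        (LinearMap.proj i)

/-- The subspace of tuples `(h_i)` with `u^{k_i} ∣ h_i` for all `i`. -/
def Cdvd (F : Type) [Field F] (f : ℕ) (k : ZMod f → ℕ) :
    Submodule F (ZMod f → PowerSeries F) where
  carrier := {h | ∀ i, (PowerSeries.X : PowerSeries F) ^ k i ∣ h i}
  add_mem' := by
    intro g h hg hh i
    rw [Pi.add_apply]
    exact dvd_add (hg i) (hh i)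
  zero_mem' := by intro i; simp
  smul_mem' := by
    intro t h hh i
    rw [Pi.smul_apply, Algebra.smul_def]
    exact Dvd.dvd.mul_left (hh i) _

lemma coeff_phiPS (p : ℕ) (F : Type) [CommRing F] (g : PowerSeries F) (n : ℕ) :
    PowerSeries.coeff (R := F) n (phiPS p F g) =
      if p ∣ n then PowerSeries.coeff (R := F) (n / p) g else 0 := by
  simp [phiPS, PowerSeries.coeff_mk]

lemma coeff_CXpow_mul (F : Type) [CommRing F] (t : F) (g : PowerSeries F) (s j : ℕ) :
    PowerSeries.coeff (R := F) j (PowerSeries.C (R := F) t * PowerSeries.X ^ s * g) =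
      t * (if s ≤ j then PowerSeries.coeff (R := F) (j - s) g else 0) := by
  rw [mul_comm (PowerSeries.C (R := F) t * PowerSeries.X ^ s) g, ← mul_assoc,
    PowerSeries.coeff_mul_X_pow']
  by_cases h : s ≤ j <;> simp [h, mul_comm]

lemma coeff_Dmap (p : ℕ) (F : Type) [Field F] (f : ℕ) (r s : ZMod f → ℕ)
    (a b : ZMod f → Fˣ) (μ : ZMod f → PowerSeries F) (i : ZMod f) (j : ℕ) :
    PowerSeries.coeff (R := F) j (Dmap p F f r s a b μ i) =
      (b i : F) * (if s i ≤ j ∧ p ∣ (j - s i)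
          then PowerSeries.coeff (R := F) ((j - s i) / p) (μ (i - 1)) else 0)
        - (a i : F) * (if r i ≤ j then PowerSeries.coeff (R := F) (j - r i) (μ i) else 0) := by
  have : Dmap p F f r s a b μ i =
      PowerSeries.C (R := F) (b i : F) * PowerSeries.X ^ s i * (phiPS p F (μ (i - 1)))
        - PowerSeries.C (R := F) (a i : F) * PowerSeries.X ^ r i * (μ i) := by
    simp [Dmap, mul_assoc]
  rw [this, map_sub, coeff_CXpow_mul, coeff_CXpow_mul, coeff_phiPS]
  congr 2
  by_cases h1 : s i ≤ j <;> by_cases h2 : p ∣ (j - s i) <;> simp [h1, h2]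

/-- Tuples of power series with coefficient support constrained by `q`. -/
def SuppIn (F : Type) [Field F] (f : ℕ) (q : ZMod f → ℕ → Prop) :
    Submodule F (ZMod f → PowerSeries F) where
  carrier := {h | ∀ (i : ZMod f) (n : ℕ), PowerSeries.coeff (R := F) n (h i) ≠ 0 → q i n}
  add_mem' := by
    intro μ ν hμ hν i n hn
    rw [Pi.add_apply, map_add] at hn
    by_cases h1 : PowerSeries.coeff (R := F) n (μ i) = 0
    · refine hν i n fun h2 => hn ?_
      rw [h1, h2, add_zero]
    · exact hμ i n h1
  zero_mem' := by intro i n hn; simp at hn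
  smul_mem' := by
    intro t μ hμ i n hn
    refine hμ i n fun h => hn ?_
    rw [Pi.smul_apply, map_smul, h, smul_zero]

lemma mem_SuppIn {F : Type} [Field F] {f : ℕ} {q : ZMod f → ℕ → Prop}
    {x : ZMod f → PowerSeries F} :
    x ∈ SuppIn F f q ↔ ∀ (i : ZMod f) (n : ℕ), PowerSeries.coeff (R := F) n (x i) ≠ 0 → q i n :=
  Iff.rfl

/-- Truncation of each component below a cutoff. -/
def truncTuple (F : Type) [Field F] (f : ℕ) (t : ZMod f → ℕ) :
    (ZMod f → PowerSeries F) →ₗ[F] (ZMod f → PowerSeries F) where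
  toFun h := fun i => PowerSeries.mk fun n => if n < t i then PowerSeries.coeff (R := F) n (h i) else 0
  map_add' g h := by
    funext i; ext n
    by_cases hn : n < t i <;> simp [PowerSeries.coeff_mk, hn]
  map_smul' c h := by
    funext i; ext n
    by_cases hn : n < t i <;> simp [PowerSeries.coeff_mk, hn]

lemma coeff_truncTuple {F : Type} [Field F] {f : ℕ} (t : ZMod f → ℕ)
    (h : ZMod f → PowerSeries F) (i : ZMod f) (n : ℕ) :
    PowerSeries.coeff (R := F) n (truncTuple F f t h i) =
      if n < t i then PowerSeries.coeff (R := F) n (h i) else 0 := by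
  simp [truncTuple, PowerSeries.coeff_mk]

/-- Evaluation equivalence for a supp-constrained space with finite support sets. -/
def suppInEquiv (F : Type) [Field F] (f : ℕ) [NeZero f] (S : ZMod f → Finset ℕ) :
    ↥(SuppIn F f (fun i n => n ∈ S i)) ≃ₗ[F] ((Σ i : ZMod f, ↥(S i)) → F) := by
  refine LinearEquiv.ofBijective
    { toFun := fun x z => PowerSeries.coeff (R := F) z.2.1 (x.1 z.1)
      map_add' := fun x y => by funext z; simp
      map_smul' := fun c x => by funext z; simp } ⟨?_, ?_⟩
  · intro x y hxy
    ext i n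
    by_cases hn : n ∈ S i
    · exact congrFun hxy ⟨i, ⟨n, hn⟩⟩
    · rw [not_imp_comm.1 (x.2 i n) hn, not_imp_comm.1 (y.2 i n) hn]
  · intro ϕ
    refine ⟨⟨fun i => ∑ j ∈ (S i).attach, PowerSeries.C (R := F) (ϕ ⟨i, j⟩) * PowerSeries.X ^ (j : ℕ), ?_⟩, ?_⟩
    · intro i n hn
      by_contra hmem
      apply hn
      rw [map_sum]
      refine Finset.sum_eq_zero fun j hj => ?_
      rw [PowerSeries.coeff_C_mul, PowerSeries.coeff_X_pow, if_neg, mul_zero]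
      intro hnj; exact hmem (hnj ▸ j.2)
    · funext z
      obtain ⟨i, j⟩ := z
      simp only [LinearMap.coe_mk, AddHom.coe_mk, map_sum, PowerSeries.coeff_C_mul,
        PowerSeries.coeff_X_pow]
      rw [Finset.sum_eq_single j]
      · simp
      · intro k _ hk
        rw [if_neg, mul_zero]
        intro hkj
        exact hk (Subtype.ext hkj.symm)
      · intro hj; exact absurd (Finset.mem_attach _ j) hj

lemma finrank_suppIn (F : Type) [Field F] (f : ℕ) [NeZero f] (S : ZMod f → Finset ℕ) :
    Module.finrank F ↥(SuppIn F f (fun i n => n ∈ S i)) = ∑ i : ZMod f, (S i).card := by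
  rw [(suppInEquiv F f S).finrank_eq, Module.finrank_pi, Fintype.card_sigma]
  simp [Fintype.card_coe]

instance finiteDimensional_suppIn (F : Type) [Field F] (f : ℕ) [NeZero f]
    (S : ZMod f → Finset ℕ) : FiniteDimensional F ↥(SuppIn F f (fun i n => n ∈ S i)) :=
  Module.Finite.equiv (suppInEquiv F f S).symm

/-- Coefficients of the recursive solution `μ` to `∂μ = h` for `h` of high valuation. -/
noncomputable def solCoeff (p N : ℕ) (F : Type) [Field F] (f : ℕ) [NeZero f]
    (r s : ZMod f → ℕ) (a b : ZMod f → Fˣ) (h : ZMod f → PowerSeries F) (n : ℕ) :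
    ZMod f → F :=
  if hn : N ≤ n ∧ 2 ≤ p ∧ (∀ j, r j < N) ∧ (∀ j, s j < N) then
    fun i =>
      (((a i)⁻¹ : Fˣ) : F) *
        ((b i : F) *
            (if p ∣ (n + r i - s i) then
              solCoeff p N F f r s a b h ((n + r i - s i) / p) (i - 1)
            else 0) -
          PowerSeries.coeff (R := F) (n + r i) (h i))
  else fun _ => 0
  termination_by n
  decreasing_by
    obtain ⟨h1, h2, h3, h4⟩ := hn
    have hb : n * 2 ≤ n * p := Nat.mul_le_mul_left n h2
    have h5 := h3 i
    rw [Nat.div_lt_iff_lt_mul (by omega : 0 < p)]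
    omega

lemma solCoeff_of_neg (p N : ℕ) (F : Type) [Field F] (f : ℕ) [NeZero f] (r s : ZMod f → ℕ)
    (a b : ZMod f → Fˣ) (h : ZMod f → PowerSeries F) (n : ℕ) (i : ZMod f)
    (hn : ¬(N ≤ n ∧ 2 ≤ p ∧ (∀ j, r j < N) ∧ (∀ j, s j < N))) :
    solCoeff p N F f r s a b h n i = 0 := by
  rw [solCoeff, dif_neg hn]

lemma solCoeff_spec (p N : ℕ) (F : Type) [Field F] (f : ℕ) [NeZero f] (r s : ZMod f → ℕ)
    (a b : ZMod f → Fˣ) (h : ZMod f → PowerSeries F) (n : ℕ) (i : ZMod f)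
    (hn : N ≤ n ∧ 2 ≤ p ∧ (∀ j, r j < N) ∧ (∀ j, s j < N)) :
    solCoeff p N F f r s a b h n i =
      (((a i)⁻¹ : Fˣ) : F) *
        ((b i : F) *
            (if p ∣ (n + r i - s i) then
              solCoeff p N F f r s a b h ((n + r i - s i) / p) (i - 1)
            else 0) -
          PowerSeries.coeff (R := F) (n + r i) (h i)) := by
  rw [solCoeff, dif_pos hn]
section Analytic

variable {p : ℕ} {F : Type} [Field F] {f : ℕ} [NeZero f] {m : ℕ}
  {N : ℕ} {r s : ZMod f → ℕ} {a b : ZMod f → Fˣ} {c d : ZMod f → ZMod m}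

lemma mem_Ctuples {γ : ZMod f → ZMod m} {x : ZMod f → PowerSeries F} :
    x ∈ Ctuples F f m γ ↔
      ∀ (i : ZMod f) (n : ℕ), PowerSeries.coeff (R := F) n (x i) ≠ 0 → (n : ZMod m) = γ i :=
  Iff.rfl

/-- `∂` maps `C⁰` into `C¹`. -/
lemma Dmap_mem_C1
    (hc : ∀ i, (p : ZMod m) * c (i - 1) = c i + (r i : ZMod m))
    (hd : ∀ i, (p : ZMod m) * d (i - 1) = d i + (s i : ZMod m))
    {μ : ZMod f → PowerSeries F} (hμ : μ ∈ Ctuples F f m fun i => c i - d i) :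
    Dmap p F f r s a b μ ∈ Ctuples F f m fun i => (r i : ZMod m) + (c i - d i) := by
  intro i j hj
  rw [coeff_Dmap] at hj
  by_cases hA : (if r i ≤ j then PowerSeries.coeff (R := F) (j - r i) (μ i) else 0) = 0
  · have h1 : (if s i ≤ j ∧ p ∣ (j - s i)
        then PowerSeries.coeff (R := F) ((j - s i) / p) (μ (i - 1)) else 0) ≠ 0 := by
      intro h0
      apply hj
      rw [h0, hA, mul_zero, mul_zero, sub_zero]
    split_ifs at h1 with hcond
    · obtain ⟨hsj, hdvd⟩ := hcond
      have hq := hμ (i - 1) _ h1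
      have hpq : p * ((j - s i) / p) = j - s i := Nat.mul_div_cancel' hdvd
      have hcast : (j : ZMod m) =
          (p : ZMod m) * (((j - s i) / p : ℕ) : ZMod m) + (s i : ZMod m) := by
        have hj' : p * ((j - s i) / p) + s i = j := by omega
        conv_lhs => rw [← hj']
        push_cast
        ring
      linear_combination hcast + (p : ZMod m) * hq + hc i - hd i
    · exact absurd rfl h1
  · split_ifs at hA with hrj
    · have hq := hμ i _ hA
      have hcast : (j : ZMod m) = ((j - r i : ℕ) : ZMod m) + (r i : ZMod m) := by
        conv_lhs => rw [← Nat.sub_add_cancel hrj]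
        push_cast
        ring
      rw [hcast, hq]
      ring
    · exact absurd rfl hA

/-- `∂` of anything satisfies the divisibility (height ≤ 1) condition. -/
lemma Dmap_coeff_low (e' : ℕ) (hre : ∀ i, r i ≤ e') (hse : ∀ i, s i ≤ e')
    (μ : ZMod f → PowerSeries F) (i : ZMod f) (j : ℕ) (hj : j < r i + s i - e') :
    PowerSeries.coeff (R := F) j (Dmap p F f r s a b μ i) = 0 := by
  rw [coeff_Dmap]
  have h1 : ¬ s i ≤ j := by have := hre i; omega
  have h2 : ¬ r i ≤ j := by have := hse i; omega
  simp [h1, h2]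

/-- If `μ` has valuation `≥ N` everywhere, `∂μ` has valuation `≥ N + r i` in component `i`. -/
lemma Dmap_high (hp2 : 2 ≤ p) (hrN : ∀ i, r i < N)
    (μ : ZMod f → PowerSeries F) (hμ : ∀ i n, n < N → PowerSeries.coeff (R := F) n (μ i) = 0)
    (i : ZMod f) (j : ℕ) (hj : j < N + r i) :
    PowerSeries.coeff (R := F) j (Dmap p F f r s a b μ i) = 0 := by
  rw [coeff_Dmap]
  have h1 : (if s i ≤ j ∧ p ∣ (j - s i)
      then PowerSeries.coeff (R := F) ((j - s i) / p) (μ (i - 1)) else 0) = 0 := by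
    split_ifs with hcond
    · refine hμ (i - 1) _ ?_
      rw [Nat.div_lt_iff_lt_mul (by omega : 0 < p)]
      have hb : N * 2 ≤ N * p := Nat.mul_le_mul_left N hp2
      have := hrN i
      omega
    · rfl
  have h2 : (if r i ≤ j then PowerSeries.coeff (R := F) (j - r i) (μ i) else 0) = 0 := by
    split_ifs with hcond
    · exact hμ i _ (by omega)
    · rfl
  rw [h1, h2, mul_zero, mul_zero, sub_zero]

/-- Injectivity of `∂` on the high-valuation part. -/
lemma Dmap_inj_high (hp2 : 2 ≤ p) (hrN : ∀ i, r i < N)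
    (μ : ZMod f → PowerSeries F) (hμ : ∀ i n, n < N → PowerSeries.coeff (R := F) n (μ i) = 0)
    (hD : Dmap p F f r s a b μ = 0) : μ = 0 := by
  classical
  by_contra hne
  have hex : ∃ n, ∃ i, PowerSeries.coeff (R := F) n (μ i) ≠ 0 := by
    by_contra hcon
    push_neg at hcon
    exact hne (funext fun i => PowerSeries.ext fun n => hcon n i)
  obtain ⟨i, hi⟩ := Nat.find_spec hex
  set n0 := Nat.find hex with hn0
  have hn0N : N ≤ n0 := by
    by_contra hcon
    exact hi (hμ i n0 (by omega))
  have h0 : PowerSeries.coeff (R := F) (n0 + r i) (Dmap p F f r s a b μ i) = 0 := by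
    rw [hD]
    simp
  rw [coeff_Dmap, if_pos (Nat.le_add_left (r i) n0), Nat.add_sub_cancel] at h0
  have hX : (if s i ≤ n0 + r i ∧ p ∣ (n0 + r i - s i)
      then PowerSeries.coeff (R := F) ((n0 + r i - s i) / p) (μ (i - 1)) else 0) ≠ 0 := by
    intro hz
    rw [hz, mul_zero, zero_sub, neg_eq_zero, mul_eq_zero] at h0
    rcases h0 with h0 | h0
    · exact (a i).ne_zero h0
    · exact hi h0
  split_ifs at hX with hcond
  · obtain ⟨hs', hdvd⟩ := hcond
    have hq : ¬ ((n0 + r i - s i) / p < n0) := fun hlt => Nat.find_min hex hlt ⟨i - 1, hX⟩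
    have hpq : p * ((n0 + r i - s i) / p) = n0 + r i - s i := Nat.mul_div_cancel' hdvd
    have h2q : 2 * ((n0 + r i - s i) / p) ≤ p * ((n0 + r i - s i) / p) :=
      Nat.mul_le_mul_right _ hp2
    have := hrN i
    omega
  · exact hX rfl

end Analytic
section Surj

variable {p : ℕ} {F : Type} [Field F] {f : ℕ} [NeZero f] {m : ℕ}
  {N : ℕ} {r s : ZMod f → ℕ} {a b : ZMod f → Fˣ} {c d : ZMod f → ZMod m}

/-- Surjectivity of `∂` from the high-valuation part of `C⁰` onto the
high-valuation part of `C¹`. -/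
lemma Dmap_surj_high (hp2 : 2 ≤ p) (hrN : ∀ i, r i < N) (hsN : ∀ i, s i < N)
    (hc : ∀ i, (p : ZMod m) * c (i - 1) = c i + (r i : ZMod m))
    (hd : ∀ i, (p : ZMod m) * d (i - 1) = d i + (s i : ZMod m))
    (h : ZMod f → PowerSeries F)
    (hC1 : h ∈ Ctuples F f m fun i => (r i : ZMod m) + (c i - d i))
    (hsupp : ∀ i j, j < N + r i → PowerSeries.coeff (R := F) j (h i) = 0) :
    ∃ μ, μ ∈ Ctuples F f m (fun i => c i - d i) ∧
      (∀ i n, n < N → PowerSeries.coeff (R := F) n (μ i) = 0) ∧ Dmap p F f r s a b μ = h := by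
  set μ : ZMod f → PowerSeries F :=
    fun i => PowerSeries.mk fun n => solCoeff p N F f r s a b h n i with hμdef
  have hμco : ∀ i n, PowerSeries.coeff (R := F) n (μ i) = solCoeff p N F f r s a b h n i := by
    intro i n
    rw [hμdef, PowerSeries.coeff_mk]
  have hlow : ∀ i n, n < N → PowerSeries.coeff (R := F) n (μ i) = 0 := by
    intro i n hn
    rw [hμco]
    exact solCoeff_of_neg p N F f r s a b h n i (fun hcon => by omega)
  refine ⟨μ, ?_, hlow, ?_⟩
  · -- congruence condition
    have main : ∀ n (i : ZMod f), solCoeff p N F f r s a b h n i ≠ 0 →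
        (n : ZMod m) = c i - d i := by
      intro n
      induction n using Nat.strong_induction_on with
      | _ n IH =>
        intro i hne
        by_cases hNn : N ≤ n
        · rw [solCoeff_spec p N F f r s a b h n i ⟨hNn, hp2, hrN, hsN⟩] at hne
          by_cases hX0 : (if p ∣ (n + r i - s i) then
              solCoeff p N F f r s a b h ((n + r i - s i) / p) (i - 1) else 0) = 0
          · have hh : PowerSeries.coeff (R := F) (n + r i) (h i) ≠ 0 := by
              intro h0
              apply hne
              rw [hX0, h0, mul_zero, sub_zero, mul_zero]
            have hco := hC1 i _ hh
            push_cast at hco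
            linear_combination hco
          · split_ifs at hX0 with hdvd
            case neg => exact absurd rfl hX0
            have hpq : p * ((n + r i - s i) / p) = n + r i - s i := Nat.mul_div_cancel' hdvd
            have hlt : (n + r i - s i) / p < n := by
              rw [Nat.div_lt_iff_lt_mul (by omega : 0 < p)]
              have hb : n * 2 ≤ n * p := Nat.mul_le_mul_left n hp2
              have := hrN i
              omega
            have hq := IH _ hlt (i - 1) hX0
            have hs' : s i ≤ n + r i := by have := hsN i; omega
            have hcast : (n : ZMod m) + (r i : ZMod m) =
                (p : ZMod m) * (((n + r i - s i) / p : ℕ) : ZMod m) + (s i : ZMod m) := by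
              have hh2 : p * ((n + r i - s i) / p) + s i = n + r i := by omega
              have : ((n + r i : ℕ) : ZMod m) = ((p * ((n + r i - s i) / p) + s i : ℕ) : ZMod m) := by
                rw [hh2]
              push_cast at this
              linear_combination this
            linear_combination hcast + (p : ZMod m) * hq + hc i - hd i
        · rw [solCoeff_of_neg p N F f r s a b h n i (fun hcon => hNn hcon.1)] at hne
          exact absurd rfl hne
    intro i n hn
    exact main n i (by rwa [hμco] at hn)
  · -- ∂μ = h
    funext i
    ext j
    rw [coeff_Dmap]
    by_cases hjN : N + r i ≤ j
    · have hrij : r i ≤ j := by have := hrN i; omega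
      have hNn : N ≤ j - r i := by omega
      have hsij : s i ≤ j := by have := hsN i; omega
      rw [if_pos hrij, hμco i (j - r i)]
      rw [solCoeff_spec p N F f r s a b h (j - r i) i ⟨hNn, hp2, hrN, hsN⟩]
      have hsub : j - r i + r i - s i = j - s i := by omega
      have hsub2 : j - r i + r i = j := by omega
      rw [hsub, hsub2]
      have hite : (if s i ≤ j ∧ p ∣ (j - s i)
          then PowerSeries.coeff (R := F) ((j - s i) / p) (μ (i - 1)) else 0) =
          (if p ∣ (j - s i) then solCoeff p N F f r s a b h ((j - s i) / p) (i - 1) else 0) := by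
        by_cases hdvd : p ∣ (j - s i)
        · rw [if_pos ⟨hsij, hdvd⟩, if_pos hdvd, hμco]
        · rw [if_neg (fun hcon => hdvd hcon.2), if_neg hdvd]
      rw [hite, ← mul_assoc]
      simp
    · push_neg at hjN
      rw [hsupp i j hjN]
      have h2 : (if r i ≤ j then PowerSeries.coeff (R := F) (j - r i) (μ i) else 0) = 0 := by
        split_ifs with hcond
        · exact hlow i _ (by omega)
        · rfl
      have h1 : (if s i ≤ j ∧ p ∣ (j - s i)
          then PowerSeries.coeff (R := F) ((j - s i) / p) (μ (i - 1)) else 0) = 0 := by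
        split_ifs with hcond
        · refine hlow (i - 1) _ ?_
          rw [Nat.div_lt_iff_lt_mul (by omega : 0 < p)]
          have hb : N * 2 ≤ N * p := Nat.mul_le_mul_left N hp2
          have := hrN i
          omega
        · rfl
      rw [h1, h2, mul_zero, mul_zero, sub_zero]

end Surj
lemma mem_Cdvd {F : Type} [Field F] {f : ℕ} {k : ZMod f → ℕ} {x : ZMod f → PowerSeries F} :
    x ∈ Cdvd F f k ↔ ∀ i, (PowerSeries.X : PowerSeries F) ^ k i ∣ x i :=
  Iff.rfl

lemma mem_Cdvd' {F : Type} [Field F] {f : ℕ} {k : ZMod f → ℕ} {x : ZMod f → PowerSeries F} :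
    x ∈ Cdvd F f k ↔ ∀ i n, n < k i → PowerSeries.coeff (R := F) n (x i) = 0 := by
  rw [mem_Cdvd]
  exact forall_congr' fun i => PowerSeries.X_pow_dvd_iff

set_option maxHeartbeats 1600000 in
set_option synthInstance.maxHeartbeats 400000 in
/-- The image in `coker ∂` of the subspace
`C¹_{≤1} = {(h_i) ∈ C¹ : u^{max(0, r_i+s_i−e')} ∣ h_i}` has dimension
`dim ker ∂ + Σ_i #{max(0, r_i+s_i−e') ≤ j < r_i : j ≡ r_i+c_i−d_i (mod m)}`;  this image is
the subspace of extensions of height at most `1` in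
`Ext¹(𝔐(r,a,c), 𝔐(s,b,d))`. -/
theorem statement_12
    (p : ℕ) (hp : p.Prime) (F : Type) [Field F] [Fintype F] [CharP F p]
    (f e m : ℕ) [NeZero f] (he : 1 ≤ e) (hm1 : 1 ≤ m) (hm : p ^ f - 1 ∣ m)
    (e' : ℕ) (he' : e' = e * m)
    (r : ZMod f → ℕ) (a : ZMod f → Fˣ) (c : ZMod f → ZMod m)
    (hr : ∀ i, r i ≤ e') (hc : ∀ i, (p : ZMod m) * c (i - 1) = c i + (r i : ZMod m))
    (s : ZMod f → ℕ) (b : ZMod f → Fˣ) (d : ZMod f → ZMod m)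
    (hs : ∀ i, s i ≤ e') (hd : ∀ i, (p : ZMod m) * d (i - 1) = d i + (s i : ZMod m)) :
    let C0 := Ctuples F f m fun i => c i - d i
    let C1 := Ctuples F f m fun i => (r i : ZMod m) + (c i - d i)
    let D := Dmap p F f r s a b
    let Im : Submodule F ↥C1 := Submodule.comap C1.subtype (Submodule.map D C0)
    let Kr : Submodule F ↥C0 := Submodule.comap C0.subtype (LinearMap.ker D)
    let C1h : Submodule F ↥C1 :=
      Submodule.comap C1.subtype (Cdvd F f fun i => r i + s i - e')
    let ImH : Submodule F (↥C1 ⧸ Im) := Submodule.map Im.mkQ C1h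
    FiniteDimensional F ↥ImH ∧ FiniteDimensional F ↥Kr ∧
      Module.finrank F ↥ImH =
        Module.finrank F ↥Kr +
          ∑ i : ZMod f,
            ((Finset.Ico (r i + s i - e') (r i)).filter
              fun j : ℕ => ((j : ℕ) : ZMod m) = (r i : ZMod m) + (c i - d i)).card := by
  intro C0 C1 D Im Kr C1h ImH
  classical
  have hC0eq : C0 = Ctuples F f m fun i => c i - d i := rfl
  have hC1eq : C1 = Ctuples F f m fun i => (r i : ZMod m) + (c i - d i) := rfl
  have hDeq : D = Dmap p F f r s a b := rfl
  have hImeq : Im = Submodule.comap C1.subtype (Submodule.map D C0) := rfl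
  have hKreq : Kr = Submodule.comap C0.subtype (LinearMap.ker D) := rfl
  have hC1heq : C1h = Submodule.comap C1.subtype (Cdvd F f fun i => r i + s i - e') := rfl
  have hImHeq : ImH = Submodule.map Im.mkQ C1h := rfl
  have hp2 : 2 ≤ p := hp.two_le
  set N : ℕ := e' + 1 with hNdef
  have hrN : ∀ i, r i < N := fun i => by have := hr i; omega
  have hsN : ∀ i, s i < N := fun i => by have := hs i; omega
  -- the two finite coefficient-support sets
  set S : ZMod f → Finset ℕ := fun i =>
    (Finset.Ico (r i + s i - e') (N + r i)).filter
      (fun j => (j : ZMod m) = (r i : ZMod m) + (c i - d i)) with hSdef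
  set S0 : ZMod f → Finset ℕ := fun i =>
    (Finset.range N).filter (fun j => (j : ZMod m) = c i - d i) with hS0def
  have hmemS : ∀ (i : ZMod f) (n : ℕ), n ∈ S i ↔
      (r i + s i - e' ≤ n ∧ n < N + r i) ∧
        (n : ZMod m) = (r i : ZMod m) + (c i - d i) := by
    intro i n
    simp only [hSdef, Finset.mem_filter, Finset.mem_Ico]
  have hmemS0 : ∀ (i : ZMod f) (n : ℕ), n ∈ S0 i ↔ n < N ∧ (n : ZMod m) = c i - d i := by
    intro i n
    simp only [hS0def, Finset.mem_filter, Finset.mem_range]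
  set Lam : Submodule F (ZMod f → PowerSeries F) := SuppIn F f (fun i n => n ∈ S i)
    with hLamdef
  set L0am : Submodule F (ZMod f → PowerSeries F) := SuppIn F f (fun i n => n ∈ S0 i)
    with hL0amdef
  have hLamC1 : Lam ≤ C1 := by
    intro x hx
    exact mem_Ctuples.mpr fun i n hn => ((hmemS i n).1 ((mem_SuppIn.1 hx) i n hn)).2
  have hL0amC0 : L0am ≤ C0 := by
    intro x hx
    exact mem_Ctuples.mpr fun i n hn => ((hmemS0 i n).1 ((mem_SuppIn.1 hx) i n hn)).2
  -- the restricted truncation-of-∂ map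
  have hΨmem : ∀ x : ↥L0am,
      ((truncTuple F f (fun i => N + r i)).comp (D.comp L0am.subtype)) x ∈ Lam := by
    intro x
    refine mem_SuppIn.mpr fun i n hn => ?_
    have hn' : PowerSeries.coeff (R := F) n (truncTuple F f (fun i => N + r i) (D x.1) i) ≠ 0 := hn
    rw [coeff_truncTuple] at hn'
    split_ifs at hn' with hlt
    · refine (hmemS i n).2 ⟨⟨?_, hlt⟩, Dmap_mem_C1 hc hd (hL0amC0 x.2) i n hn'⟩
      by_contra hcon
      push_neg at hcon
      exact hn' (Dmap_coeff_low e' hr hs x.1 i n (by omega))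
    · exact absurd rfl hn'
  set ΨL : ↥L0am →ₗ[F] ↥Lam :=
    LinearMap.codRestrict Lam ((truncTuple F f (fun i => N + r i)).comp (D.comp L0am.subtype))
      hΨmem with hΨdef
  have hΨval : ∀ x : ↥L0am,
      (ΨL x : ZMod f → PowerSeries F) = truncTuple F f (fun i => N + r i) (D x.1) := fun x => rfl
  -- the restricted quotient map
  set inc : ↥Lam →ₗ[F] ↥C1 := Submodule.inclusion hLamC1 with hincdef
  have hincval : ∀ x : ↥Lam, ((inc x : ↥C1) : ZMod f → PowerSeries F) = x.1 := fun x => rfl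
  have hincC1h : ∀ x : ↥Lam, inc x ∈ C1h := by
    intro x
    rw [hC1heq, Submodule.mem_comap]
    refine mem_Cdvd'.mpr fun i n hn => ?_
    by_contra hne
    have hmem := (hmemS i n).1 ((mem_SuppIn.1 x.2) i n hne)
    omega
  have hΦmem : ∀ x : ↥Lam, (Im.mkQ.comp inc) x ∈ ImH := by
    intro x
    rw [hImHeq]
    exact Submodule.mem_map_of_mem (hincC1h x)
  set ΦL : ↥Lam →ₗ[F] ↥ImH := LinearMap.codRestrict ImH (Im.mkQ.comp inc) hΦmem with hΦdef
  have hΦval : ∀ x : ↥Lam, (ΦL x : ↥C1 ⧸ Im) = Im.mkQ (inc x) := fun x => rfl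
  -- surjectivity of ΦL
  have hΦsurj : Function.Surjective ΦL := by
    intro y
    have hy2 : (y : ↥C1 ⧸ Im) ∈ Submodule.map Im.mkQ C1h := by
      rw [← hImHeq]; exact y.2
    obtain ⟨z, hzC1h, hz⟩ := Submodule.mem_map.1 hy2
    have hzdvd : ∀ i n, n < r i + s i - e' →
        PowerSeries.coeff (R := F) n ((z : ZMod f → PowerSeries F) i) = 0 := by
      rw [hC1heq, Submodule.mem_comap] at hzC1h
      exact mem_Cdvd'.1 hzC1h
    set l := truncTuple F f (fun i => N + r i) (z : ZMod f → PowerSeries F) with hldef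
    have hlLam : l ∈ Lam := by
      refine mem_SuppIn.mpr fun i n hn => ?_
      rw [hldef, coeff_truncTuple] at hn
      split_ifs at hn with hlt
      · refine (hmemS i n).2 ⟨⟨?_, hlt⟩, (mem_Ctuples.1 z.2) i n hn⟩
        by_contra hcon
        push_neg at hcon
        exact hn (hzdvd i n (by omega))
      · exact absurd rfl hn
    set w := (z : ZMod f → PowerSeries F) - l with hwdef
    have hwC1 : w ∈ C1 := C1.sub_mem z.2 (hLamC1 hlLam)
    have hwsupp : ∀ i j, j < N + r i → PowerSeries.coeff (R := F) j (w i) = 0 := by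
      intro i j hj
      rw [hwdef, Pi.sub_apply, map_sub, hldef, coeff_truncTuple, if_pos hj, sub_self]
    obtain ⟨μ, hμC0, hμsupp, hμD⟩ := Dmap_surj_high hp2 hrN hsN hc hd w hwC1 hwsupp
    refine ⟨⟨l, hlLam⟩, ?_⟩
    apply Subtype.ext
    rw [hΦval, ← hz, Submodule.mkQ_apply, Submodule.mkQ_apply, Submodule.Quotient.eq]
    have hdiff : z - inc ⟨l, hlLam⟩ ∈ Im := by
      rw [hImeq, Submodule.mem_comap]
      have hval : C1.subtype (z - inc ⟨l, hlLam⟩) = w := rfl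
      rw [hval]
      exact Submodule.mem_map.2 ⟨μ, hμC0, hμD⟩
    rw [← neg_sub]
    exact Im.neg_mem hdiff
  -- kernel of ΦL equals range of ΨL
  have hkerrange : LinearMap.ker ΦL = LinearMap.range ΨL := by
    apply le_antisymm
    · intro x hx
      have hx0 : Im.mkQ (inc x) = 0 := by
        have := LinearMap.mem_ker.1 hx
        have h2 := congrArg (Subtype.val) this
        rw [hΦval] at h2
        exact h2
      have hxIm : inc x ∈ Im := by
        rwa [Submodule.mkQ_apply, Submodule.Quotient.mk_eq_zero] at hx0
      rw [hImeq, Submodule.mem_comap] at hxIm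
      obtain ⟨μ, hμC0, hμD⟩ := Submodule.mem_map.1 hxIm
      set l := truncTuple F f (fun _ => N) μ with hldef
      have hlmem : l ∈ L0am := by
        refine mem_SuppIn.mpr fun i n hn => ?_
        rw [hldef, coeff_truncTuple] at hn
        split_ifs at hn with hlt
        · exact (hmemS0 i n).2 ⟨hlt, (mem_Ctuples.1 hμC0) i n hn⟩
        · exact absurd rfl hn
      refine ⟨⟨l, hlmem⟩, ?_⟩
      apply Subtype.ext
      rw [hΨval]
      have hv : ∀ i n, n < N → PowerSeries.coeff (R := F) n ((μ - l) i) = 0 := by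
        intro i n hn
        rw [Pi.sub_apply, map_sub, hldef, coeff_truncTuple, if_pos hn, sub_self]
      have hδ : ∀ i j, j < N + r i → PowerSeries.coeff (R := F) j (D (μ - l) i) = 0 :=
        fun i j hj => Dmap_high hp2 hrN (μ - l) hv i j hj
      have hDl : D l = D μ - D (μ - l) := by
        rw [map_sub]
        abel
      funext i
      ext n
      rw [coeff_truncTuple]
      by_cases hlt : n < N + r i
      · rw [if_pos hlt, hDl, Pi.sub_apply, map_sub, hδ i n hlt, sub_zero, hμD]
        rfl
      · rw [if_neg hlt]
        by_contra hne
        have := (hmemS i n).1 ((mem_SuppIn.1 x.2) i n (fun h0 => hne h0.symm))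
        omega
    · rintro x ⟨l, rfl⟩
      rw [LinearMap.mem_ker]
      apply Subtype.ext
      show Im.mkQ (inc (ΨL l)) = 0
      rw [Submodule.mkQ_apply, Submodule.Quotient.mk_eq_zero]
      have hDlC1 : D l.1 ∈ C1 := Dmap_mem_C1 hc hd (hL0amC0 l.2)
      set w := D l.1 - truncTuple F f (fun i => N + r i) (D l.1) with hwdef
      have hwC1 : w ∈ C1 := C1.sub_mem hDlC1 (hLamC1 (hΨmem l))
      have hwsupp : ∀ i j, j < N + r i → PowerSeries.coeff (R := F) j (w i) = 0 := by
        intro i j hj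
        rw [hwdef, Pi.sub_apply, map_sub, coeff_truncTuple, if_pos hj, sub_self]
      obtain ⟨μ, hμC0, hμsupp, hμD⟩ := Dmap_surj_high hp2 hrN hsN hc hd w hwC1 hwsupp
      rw [hImeq, Submodule.mem_comap]
      refine Submodule.mem_map.2 ⟨l.1 - μ, C0.sub_mem (hL0amC0 l.2) hμC0, ?_⟩
      rw [map_sub, hμD, hwdef]
      have hval : C1.subtype (inc (ΨL l)) = truncTuple F f (fun i => N + r i) (D l.1) := rfl
      rw [hval]
      abel
  -- the map Kr → ker ΨL
  have hKrD : ∀ x : ↥Kr, D (x.1 : ZMod f → PowerSeries F) = 0 := by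
    intro x
    have h2 : x.1 ∈ Submodule.comap C0.subtype (LinearMap.ker D) := by
      rw [← hKreq]; exact x.2
    rw [Submodule.mem_comap, LinearMap.mem_ker] at h2
    exact h2
  set θbase : ↥Kr →ₗ[F] (ZMod f → PowerSeries F) :=
    (truncTuple F f (fun _ => N)).comp (C0.subtype.comp Kr.subtype) with hθbdef
  have hθbval : ∀ x : ↥Kr, θbase x = truncTuple F f (fun _ => N) (x.1 : ZMod f → PowerSeries F) :=
    fun x => rfl
  have hθmemL0 : ∀ x : ↥Kr, θbase x ∈ L0am := by
    intro x
    refine mem_SuppIn.mpr fun i n hn => ?_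
    rw [hθbval, coeff_truncTuple] at hn
    split_ifs at hn with hlt
    · exact (hmemS0 i n).2 ⟨hlt, (mem_Ctuples.1 x.1.2) i n hn⟩
    · exact absurd rfl hn
  set θ1 : ↥Kr →ₗ[F] ↥L0am := LinearMap.codRestrict L0am θbase hθmemL0 with hθ1def
  have hθker : ∀ x : ↥Kr, θ1 x ∈ LinearMap.ker ΨL := by
    intro x
    rw [LinearMap.mem_ker]
    apply Subtype.ext
    rw [hΨval]
    have hval : ((θ1 x : ↥L0am) : ZMod f → PowerSeries F) = θbase x := rfl
    rw [hval]
    have hv : ∀ i n, n < N →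
        PowerSeries.coeff (R := F) n (((x.1 : ZMod f → PowerSeries F) - θbase x) i) = 0 := by
      intro i n hn
      rw [Pi.sub_apply, map_sub, hθbval, coeff_truncTuple, if_pos hn, sub_self]
    have hδ := Dmap_high (r := r) (s := s) (a := a) (b := b) hp2 hrN _ hv
    have hD0 : D (θbase x) = -(D ((x.1 : ZMod f → PowerSeries F) - θbase x)) := by
      rw [map_sub, hKrD x, zero_sub, neg_neg]
    funext i
    ext n
    rw [coeff_truncTuple]
    split_ifs with hlt
    · rw [hD0, Pi.neg_apply, map_neg, hδ i n hlt, neg_zero]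
      simp
    · simp
  set θ : ↥Kr →ₗ[F] ↥(LinearMap.ker ΨL) :=
    LinearMap.codRestrict (LinearMap.ker ΨL) θ1 hθker with hθdef
  have hθ0 : ∀ x : ↥Kr, θ x = 0 → x = 0 := by
    intro x hx0
    have htr : truncTuple F f (fun _ => N) (x.1 : ZMod f → PowerSeries F) = 0 := by
      have h1 := congrArg (fun z : ↥(LinearMap.ker ΨL) => ((z.1 : ↥L0am) : ZMod f → PowerSeries F)) hx0
      exact h1
    have hsup : ∀ i n, n < N → PowerSeries.coeff (R := F) n ((x.1 : ZMod f → PowerSeries F) i) = 0 := by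
      intro i n hn
      have h2 := congrArg (PowerSeries.coeff (R := F) n) (congrFun htr i)
      rw [coeff_truncTuple, if_pos hn] at h2
      simpa using h2
    have := Dmap_inj_high (s := s) (a := a) (b := b) hp2 hrN _ hsup (hKrD x)
    exact Subtype.ext (Subtype.ext this)
  have hkerθ : LinearMap.ker θ = ⊥ :=
    (Submodule.eq_bot_iff _).2 fun x hx => hθ0 x (LinearMap.mem_ker.1 hx)
  have hθinj : Function.Injective θ := fun x y hxy => by
    have htr : truncTuple F f (fun _ => N) (x.1 : ZMod f → PowerSeries F) =
        truncTuple F f (fun _ => N) (y.1 : ZMod f → PowerSeries F) :=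
      congrArg (fun z : ↥(LinearMap.ker ΨL) => ((z.1 : ↥L0am) : ZMod f → PowerSeries F)) hxy
    have hsup : ∀ i n, n < N → PowerSeries.coeff (R := F) n
        (((x.1 : ZMod f → PowerSeries F) - (y.1 : ZMod f → PowerSeries F)) i) = 0 := by
      intro i n hn
      have h2 := congrArg (PowerSeries.coeff (R := F) n) (congrFun htr i)
      rw [coeff_truncTuple, coeff_truncTuple, if_pos hn, if_pos hn] at h2
      rw [Pi.sub_apply, map_sub, h2, sub_self]
    have hD : D ((x.1 : ZMod f → PowerSeries F) - (y.1 : ZMod f → PowerSeries F)) = 0 := by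
      rw [map_sub, hKrD x, hKrD y, sub_self]
    have := Dmap_inj_high (s := s) (a := a) (b := b) hp2 hrN _ hsup hD
    exact Subtype.ext (Subtype.ext (sub_eq_zero.1 this))
  have hθsurj : Function.Surjective θ := by
    intro y
    have hΨ0 : truncTuple F f (fun i => N + r i) (D ((y.1 : ↥L0am) : ZMod f → PowerSeries F)) = 0 := by
      have h1 := LinearMap.mem_ker.1 y.2
      calc truncTuple F f (fun i => N + r i) (D ((y.1 : ↥L0am) : ZMod f → PowerSeries F))
          = ((ΨL y.1 : ↥Lam) : ZMod f → PowerSeries F) := (hΨval y.1).symm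
        _ = ((0 : ↥Lam) : ZMod f → PowerSeries F) := by rw [h1]
        _ = 0 := rfl
    have hDsupp : ∀ i j, j < N + r i →
        PowerSeries.coeff (R := F) j (D ((y.1 : ↥L0am) : ZMod f → PowerSeries F) i) = 0 := by
      intro i j hj
      have := congrArg (PowerSeries.coeff (R := F) j) (congrFun hΨ0 i)
      rw [coeff_truncTuple, if_pos hj] at this
      simpa using this
    have hDC1 : D ((y.1 : ↥L0am) : ZMod f → PowerSeries F) ∈ C1 :=
      Dmap_mem_C1 hc hd (hL0amC0 y.1.2)
    obtain ⟨μ, hμC0, hμsupp, hμD⟩ := Dmap_surj_high hp2 hrN hsN hc hd _ hDC1 hDsupp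
    have hκC0 : ((y.1 : ↥L0am) : ZMod f → PowerSeries F) - μ ∈ C0 :=
      C0.sub_mem (hL0amC0 y.1.2) hμC0
    have hκker : (⟨_, hκC0⟩ : ↥C0) ∈ Kr := by
      rw [hKreq, Submodule.mem_comap, LinearMap.mem_ker]
      have hval : C0.subtype ⟨_, hκC0⟩ = ((y.1 : ↥L0am) : ZMod f → PowerSeries F) - μ := rfl
      rw [hval, map_sub, hμD, sub_self]
    refine ⟨⟨_, hκker⟩, ?_⟩
    apply Subtype.ext
    apply Subtype.ext
    have hval : ((((θ ⟨_, hκker⟩ : ↥(LinearMap.ker ΨL)).1 : ↥L0am)) : ZMod f → PowerSeries F) =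
        truncTuple F f (fun _ => N) (((y.1 : ↥L0am) : ZMod f → PowerSeries F) - μ) := rfl
    rw [hval]
    funext i
    ext n
    rw [coeff_truncTuple]
    split_ifs with hlt
    · rw [Pi.sub_apply, map_sub, hμsupp i n hlt, sub_zero]
    · by_contra hne
      have := (hmemS0 i n).1 ((mem_SuppIn.1 y.1.2) i n fun h0 => hne h0.symm)
      omega
  -- finite dimensionality and rank computations
  have hfinLam : FiniteDimensional F ↥Lam := finiteDimensional_suppIn F f S
  have hfinL0 : FiniteDimensional F ↥L0am := finiteDimensional_suppIn F f S0
  have hImHfin : FiniteDimensional F ↥ImH := Module.Finite.of_surjective ΦL hΦsurj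
  have eθ : ↥Kr ≃ₗ[F] ↥(LinearMap.ker ΨL) := LinearEquiv.ofBijective θ ⟨hθinj, hθsurj⟩
  have hKrfin : FiniteDimensional F ↥Kr := Module.Finite.equiv eθ.symm
  refine ⟨hImHfin, hKrfin, ?_⟩
  have hrk1 := LinearMap.finrank_range_add_finrank_ker ΦL
  have hrk2 := LinearMap.finrank_range_add_finrank_ker ΨL
  have hrange_top : LinearMap.range ΦL = ⊤ := LinearMap.range_eq_top.2 hΦsurj
  have h1 : Module.finrank F ↥(LinearMap.range ΦL) = Module.finrank F ↥ImH := by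
    rw [hrange_top]
    exact finrank_top F ↥ImH
  have hKrrank : Module.finrank F ↥Kr = Module.finrank F ↥(LinearMap.ker ΨL) := eθ.finrank_eq
  have hLamrank : Module.finrank F ↥Lam = ∑ i : ZMod f, (S i).card := finrank_suppIn F f S
  have hL0rank : Module.finrank F ↥L0am = ∑ i : ZMod f, (S0 i).card := finrank_suppIn F f S0
  have hcomb : ∑ i : ZMod f, (S i).card = (∑ i : ZMod f, (S0 i).card) +
      ∑ i : ZMod f, ((Finset.Ico (r i + s i - e') (r i)).filter
        fun j : ℕ => ((j : ℕ) : ZMod m) = (r i : ZMod m) + (c i - d i)).card := by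
    rw [← Finset.sum_add_distrib]
    refine Finset.sum_congr rfl fun i _ => ?_
    have himg : (S0 i).image (· + r i) =
        (Finset.Ico (r i) (N + r i)).filter
          (fun j : ℕ => ((j : ℕ) : ZMod m) = (r i : ZMod m) + (c i - d i)) := by
      ext j
      simp only [Finset.mem_image, Finset.mem_filter, Finset.mem_Ico, hS0def,
        Finset.mem_range]
      constructor
      · rintro ⟨j', ⟨hj', hcong⟩, rfl⟩
        refine ⟨⟨Nat.le_add_left _ _, by omega⟩, ?_⟩
        push_cast
        rw [hcong]
        ring
      · rintro ⟨⟨h1', h2'⟩, hcong⟩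
        refine ⟨j - r i, ⟨by omega, ?_⟩, by omega⟩
        have hcast : ((j - r i : ℕ) : ZMod m) + (r i : ZMod m) = (j : ZMod m) := by
          conv_rhs => rw [← Nat.sub_add_cancel h1']
          push_cast
          ring
        linear_combination hcast + hcong
    have hcard2 : (S0 i).card = ((Finset.Ico (r i) (N + r i)).filter
        (fun j : ℕ => ((j : ℕ) : ZMod m) = (r i : ZMod m) + (c i - d i))).card := by
      rw [← himg, Finset.card_image_of_injective _ (add_left_injective (r i))]
    have hsplit : S i = ((Finset.Ico (r i + s i - e') (r i)).filter
          (fun j : ℕ => ((j : ℕ) : ZMod m) = (r i : ZMod m) + (c i - d i))) ∪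
        ((Finset.Ico (r i) (N + r i)).filter
          (fun j : ℕ => ((j : ℕ) : ZMod m) = (r i : ZMod m) + (c i - d i))) := by
      rw [hSdef, ← Finset.filter_union,
        Finset.Ico_union_Ico_eq_Ico (by have := hs i; omega) (by omega)]
    rw [hsplit, Finset.card_union_of_disjoint
      (Finset.disjoint_filter_filter (Finset.Ico_disjoint_Ico_consecutive _ _ _))]
    rw [hcard2]
    ring
  rw [hkerrange] at hrk1
  omega
end
end

section
/- Let (r,a,c) and (s,b,d) be two rank one data. Then dim_F H ≤ ⌈e/(p−1)⌉·f. (Since the paper identifies the group kExt^1 of extensions of M(r,a,c) by M(s,b,d) that split after inverting u with a quotient of H, this yields the paper's bound dim_F kExt^1(M(r,a,c), M(s,b,d)) ≤ ⌈e/(p−1)⌉·f.) -/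
open PowerSeries

noncomputable section

/-- The image of `F⟦u⟧` in `F((u))`, as an `F`-subspace. -/
def PSsub (F : Type) [Field F] : Submodule F (LaurentSeries F) :=
  Submodule.span F (Set.range ⇑(algebraMap (PowerSeries F) (LaurentSeries F)))

/-- The set `H` computing `Hom(𝔐(r,a,c), 𝔐(s,b,d)[1/u]/𝔐(s,b,d))`: tuples `(μ_i)` in
`F((u))/F⟦u⟧` such that every nonzero term of `μ_i` occurs in a degree `n ≡ c_i − d_i (mod m)`
and `a_i·u^{r_i}·μ_i = b_i·u^{s_i}·φ(μ_{i−1})` in `F((u))/F⟦u⟧` for all `i`. -/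
def Hset (F : Type) [Field F] (f m : ℕ) (r s : ZMod f → ℕ) (a b : ZMod f → Fˣ)
    (c d : ZMod f → ZMod m) (φL : LaurentSeries F →+ LaurentSeries F) :
    Set (ZMod f → (LaurentSeries F ⧸ PSsub F)) :=
  {μ | ∃ x : ZMod f → LaurentSeries F,
    (∀ i, Submodule.Quotient.mk (x i) = μ i) ∧
    (∀ (i : ZMod f) (n : ℤ), n < 0 → (x i).coeff n ≠ 0 → (n : ZMod m) = c i - d i) ∧
    (∀ i : ZMod f,
      (Submodule.Quotient.mk (algebraMap (PowerSeries F) (LaurentSeries F)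
          (PowerSeries.C (R := F) (a i : F) * PowerSeries.X ^ r i) * x i) :
        LaurentSeries F ⧸ PSsub F) =
      Submodule.Quotient.mk (algebraMap (PowerSeries F) (LaurentSeries F)
          (PowerSeries.C (R := F) (b i : F) * PowerSeries.X ^ s i) * φL (x (i - 1))))}

namespace Statement16Aux

variable {F : Type} [Field F]

lemma coeff_mem_PSsub {y : LaurentSeries F} (hy : y ∈ PSsub F) {n : ℤ} (hn : n < 0) :
    y.coeff n = 0 := by
  induction hy using Submodule.span_induction with
  | mem z hz =>
    obtain ⟨w, rfl⟩ := hz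
    rw [LaurentSeries.coe_algebraMap]
    rw [PowerSeries.coeff_coe, if_pos hn]
  | zero => simp
  | add u v _ _ hu hv => rw [HahnSeries.coeff_add, hu, hv, add_zero]
  | smul t u _ hu => rw [HahnSeries.coeff_smul, hu, smul_zero]

lemma mem_PSsub_of {y : LaurentSeries F} (h : ∀ n : ℤ, n < 0 → y.coeff n = 0) :
    y ∈ PSsub F := by
  refine Submodule.subset_span ⟨PowerSeries.mk (fun k => y.coeff (k : ℤ)), ?_⟩
  apply HahnSeries.coeff_injective
  funext n
  rw [LaurentSeries.coe_algebraMap, PowerSeries.coeff_coe]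
  by_cases hn : n < 0
  · rw [if_pos hn, h n hn]
  · rw [if_neg hn, PowerSeries.coeff_mk]
    congr 1
    omega

/-- Coefficient extraction as a linear map. -/
def coeffL (n : ℤ) : LaurentSeries F →ₗ[F] F where
  toFun y := y.coeff n
  map_add' _ _ := HahnSeries.coeff_add
  map_smul' _ _ := HahnSeries.coeff_smul

/-- Coefficient extraction on the quotient, for negative degrees. -/
def qc (n : ℤ) (hn : n < 0) : (LaurentSeries F ⧸ PSsub F) →ₗ[F] F :=
  Submodule.liftQ _ (coeffL n) (fun y hy => coeff_mem_PSsub hy hn)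

@[simp] lemma qc_mk (n : ℤ) (hn : n < 0) (x : LaurentSeries F) :
    qc n hn (Submodule.Quotient.mk x) = x.coeff n := rfl

lemma deg_neg (u k m : ℕ) : -(1 + (u : ℤ) + (k : ℕ) * (m : ℤ)) < 0 := by
  have : (0:ℤ) < 1 + (u : ℤ) + (k : ℕ) * (m : ℤ) := by positivity
  omega

lemma alg_single (α : F) (k : ℕ) :
    (algebraMap (PowerSeries F) (LaurentSeries F)) (PowerSeries.C (R := F) α * PowerSeries.X ^ k)
      = HahnSeries.single (k : ℤ) α := by
  rw [map_mul, map_pow, LaurentSeries.coe_algebraMap, HahnSeries.ofPowerSeries_C,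
    HahnSeries.ofPowerSeries_X, HahnSeries.single_pow, HahnSeries.C_apply,
    HahnSeries.single_mul_single, zero_add, one_pow, mul_one, nsmul_eq_mul, mul_one]

lemma alg_mul_coeff (α : F) (k : ℕ) (x : LaurentSeries F) (j : ℤ) :
    ((algebraMap (PowerSeries F) (LaurentSeries F))
        (PowerSeries.C (R := F) α * PowerSeries.X ^ k) * x).coeff j = α * x.coeff (j - k) := by
  rw [alg_single]
  have := HahnSeries.coeff_single_mul_add (r := α) (x := x) (a := j - (k : ℤ)) (b := (k : ℤ))
  simpa using this

/-- The comparison linear map. -/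
def theta (F : Type) [Field F] (f N m : ℕ) (o : ZMod f → ℕ) :
    (ZMod f → LaurentSeries F ⧸ PSsub F) →ₗ[F] (ZMod f → Fin N → F) where
  toFun μ i k := qc (-(1 + (o i : ℤ) + ((k : ℕ) : ℕ) * (m : ℤ))) (deg_neg _ _ _) (μ i)
  map_add' μ ν := by funext i k; simp [Pi.add_apply, map_add]
  map_smul' t μ := by funext i k; simp [Pi.smul_apply, map_smul]

lemma theta_apply (F : Type) [Field F] (f N m : ℕ) (o : ZMod f → ℕ)
    (μ : ZMod f → LaurentSeries F ⧸ PSsub F) (i : ZMod f) (k : Fin N) :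
    theta F f N m o μ i k
      = qc (-(1 + (o i : ℤ) + ((k : ℕ) : ℕ) * (m : ℤ))) (deg_neg _ _ _) (μ i) := rfl

end Statement16Aux

open Statement16Aux

set_option maxHeartbeats 1000000 in
/-- For any two rank one data `(r,a,c)`, `(s,b,d)` one has
`dim_F H ≤ ⌈e/(p−1)⌉·f`; hence the same bound for
`dim_F kExt¹(𝔐(r,a,c), 𝔐(s,b,d))`, which is a quotient of `H`. -/
theorem statement_16
    (p : ℕ) (hp : p.Prime) (F : Type) [Field F] [Fintype F] [CharP F p]
    (f e m : ℕ) [NeZero f] (he : 1 ≤ e) (hm1 : 1 ≤ m) (hm : p ^ f - 1 ∣ m)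
    (e' : ℕ) (he' : e' = e * m)
    (r : ZMod f → ℕ) (a : ZMod f → Fˣ) (c : ZMod f → ZMod m)
    (hr : ∀ i, r i ≤ e') (hc : ∀ i, (p : ZMod m) * c (i - 1) = c i + (r i : ZMod m))
    (s : ZMod f → ℕ) (b : ZMod f → Fˣ) (d : ZMod f → ZMod m)
    (hs : ∀ i, s i ≤ e') (hd : ∀ i, (p : ZMod m) * d (i - 1) = d i + (s i : ZMod m))
    (φL : LaurentSeries F →+ LaurentSeries F)
    (hφ1 : ∀ (x : LaurentSeries F) (k : ℤ), (φL x).coeff (p * k) = x.coeff k)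
    (hφ2 : ∀ (x : LaurentSeries F) (n : ℤ), ¬(p : ℤ) ∣ n → (φL x).coeff n = 0) :
    Module.rank F ↥(Submodule.span F (Hset F f m r s a b c d φL)) ≤
      ((⌈(e : ℚ) / ((p : ℚ) - 1)⌉₊ * f : ℕ) : Cardinal) := by
  haveI : NeZero m := ⟨by omega⟩
  have hp2 : 2 ≤ p := hp.two_le
  have hp2' : (2:ℤ) ≤ (p:ℤ) := by exact_mod_cast hp2
  set N : ℕ := ⌈(e : ℚ) / ((p : ℚ) - 1)⌉₊ with hN
  have heN : (e : ℤ) ≤ (N : ℤ) * ((p:ℤ) - 1) := by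
    have h1 := Nat.le_ceil ((e : ℚ) / ((p : ℚ) - 1))
    have hppos : (0:ℚ) < (p:ℚ) - 1 := by
      have : (2:ℚ) ≤ (p:ℚ) := by exact_mod_cast hp2
      linarith
    rw [div_le_iff₀ hppos] at h1
    have h2 : (e:ℚ) ≤ (N:ℚ) * ((p:ℚ) - 1) := h1
    have h3 : ((e:ℤ):ℚ) ≤ (((N : ℤ) * ((p:ℤ) - 1) : ℤ) : ℚ) := by push_cast; push_cast at h2; linarith
    exact_mod_cast h3
  set o : ZMod f → ℕ := fun i => (d i - c i - 1 : ZMod m).val with ho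
  -- φL commutes with scalars
  have hmulsmul : ∀ (t : F) (u v : LaurentSeries F), u * (t • v) = t • (u * v) := by
    intro t u v
    rw [← HahnSeries.single_zero_mul_eq_smul, ← HahnSeries.single_zero_mul_eq_smul]
    ring
  have hφsmul : ∀ (α : F) (y : LaurentSeries F), φL (α • y) = α • φL y := by
    intro α y
    apply HahnSeries.coeff_injective
    funext n
    by_cases hdvd : (p:ℤ) ∣ n
    · obtain ⟨k, rfl⟩ := hdvd
      rw [hφ1, HahnSeries.coeff_smul, HahnSeries.coeff_smul, hφ1]
    · rw [hφ2 _ _ hdvd, HahnSeries.coeff_smul, hφ2 _ _ hdvd, smul_zero]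
  -- Hset is a submodule
  set W : Submodule F (ZMod f → LaurentSeries F ⧸ PSsub F) :=
    { carrier := Hset F f m r s a b c d φL
      add_mem' := by
        rintro μ ν ⟨x, hmkx, hsx, hrx⟩ ⟨y, hmky, hsy, hry⟩
        refine ⟨fun i => x i + y i, fun i => ?_, fun i n hn hne => ?_, fun i => ?_⟩
        · show Submodule.Quotient.mk (x i + y i) = μ i + ν i
          rw [← hmkx i, ← hmky i, ← Submodule.Quotient.mk_add]
        · rw [HahnSeries.coeff_add] at hne
          by_cases h0 : (x i).coeff n = 0
          · exact hsy i n hn (fun h => hne (by rw [h0, h, add_zero]))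
          · exact hsx i n hn h0
        · show Submodule.Quotient.mk (_ * (x i + y i))
            = Submodule.Quotient.mk (_ * φL (x (i-1) + y (i-1)))
          rw [mul_add, map_add φL, mul_add, Submodule.Quotient.mk_add,
            Submodule.Quotient.mk_add, hrx i, hry i]
      zero_mem' := by
        refine ⟨fun _ => 0, fun i => ?_, fun i n hn hne => ?_, fun i => ?_⟩
        · show Submodule.Quotient.mk (0 : LaurentSeries F) = (0 : LaurentSeries F ⧸ PSsub F)
          simp
        · exact absurd rfl hne
        · show Submodule.Quotient.mk (_ * (0:LaurentSeries F))
            = Submodule.Quotient.mk (_ * φL 0)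
          rw [map_zero φL, mul_zero, mul_zero]
      smul_mem' := by
        rintro t μ ⟨x, hmkx, hsx, hrx⟩
        refine ⟨fun i => t • x i, fun i => ?_, fun i n hn hne => ?_, fun i => ?_⟩
        · show Submodule.Quotient.mk (t • x i) = t • μ i
          rw [← hmkx i, ← Submodule.Quotient.mk_smul]
        · rw [HahnSeries.coeff_smul] at hne
          exact hsx i n hn (fun h => hne (by rw [h, smul_zero]))
        · show Submodule.Quotient.mk (_ * (t • x i))
            = Submodule.Quotient.mk (_ * φL (t • x (i-1)))
          rw [hφsmul, hmulsmul, hmulsmul,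
            Submodule.Quotient.mk_smul, Submodule.Quotient.mk_smul, hrx i] } with hWdef
  have hspan : Submodule.span F (Hset F f m r s a b c d φL) = W := by
    have : Hset F f m r s a b c d φL = (W : Set _) := rfl
    rw [this, Submodule.span_eq W]
  -- key injectivity
  have key : ∀ μ ∈ Hset F f m r s a b c d φL, theta F f N m o μ = 0 → μ = 0 := by
    rintro μ ⟨x, hmk, hsupp, hrel⟩ hΘ
    have hcoeffrel : ∀ (i : ZMod f) (j : ℤ), j < 0 →
        (a i : F) * (x i).coeff (j - r i) = (b i : F) * (φL (x (i-1))).coeff (j - s i) := by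
      intro i j hj
      have h := (Submodule.Quotient.eq _).mp (hrel i)
      have h2 := coeff_mem_PSsub h hj
      rw [HahnSeries.coeff_sub, sub_eq_zero, alg_mul_coeff, alg_mul_coeff] at h2
      exact h2
    -- one step of the descending chain
    have step : ∀ (i : ZMod f) (n : ℤ), n < 0 → (e':ℤ) < ((p:ℤ)-1) * (-n) →
        (x i).coeff n ≠ 0 →
        ∃ n' : ℤ, n' < n ∧ (e':ℤ) < ((p:ℤ)-1) * (-n') ∧ (x (i+1)).coeff n' ≠ 0 := by
      intro i n hn hbig hne
      have hexp : ((p:ℤ)-1) * (-n) = -((p:ℤ)*n) + n := by ring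
      rw [hexp] at hbig
      have hsle : (s (i+1) : ℤ) ≤ (e':ℤ) := by exact_mod_cast hs (i+1)
      have hrle : (r (i+1) : ℤ) ≤ (e':ℤ) := by exact_mod_cast hr (i+1)
      have hrpos : (0:ℤ) ≤ (r (i+1) : ℤ) := Int.natCast_nonneg _
      set j : ℤ := (p:ℤ)*n + (s (i+1) : ℤ) with hj
      have hjneg : j < 0 := by simp only [hj]; linarith
      have hcr := hcoeffrel (i+1) j hjneg
      have hjs : j - (s (i+1) : ℤ) = (p:ℤ)*n := by simp only [hj]; ring
      rw [hjs, hφ1] at hcr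
      have hi1 : i + 1 - 1 = i := by ring
      rw [hi1] at hcr
      refine ⟨j - (r (i+1) : ℤ), by simp only [hj]; linarith, ?_, ?_⟩
      · have hmono : ((p:ℤ)-1) * (-n) ≤ ((p:ℤ)-1) * (-(j - (r (i+1) : ℤ))) := by
          apply mul_le_mul_of_nonneg_left _ (by linarith)
          simp only [hj]; linarith
        rw [hexp] at hmono; linarith
      · intro h0
        rw [h0, mul_zero] at hcr
        have hb0 : (b (i+1) : F) ≠ 0 := Units.ne_zero _
        exact hne ((mul_eq_zero.mp hcr.symm).resolve_left hb0)
    -- Claim A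
    have claimA : ∀ (i : ZMod f) (n : ℤ), n < 0 → (e':ℤ) < ((p:ℤ)-1) * (-n) →
        (x i).coeff n = 0 := by
      by_contra hcon
      push_neg at hcon
      obtain ⟨i₀, n₀, hn₀, hbig₀, hne₀⟩ := hcon
      have hBex : ∀ i : ZMod f, ∃ B : ℤ, ∀ n : ℤ, n < B → (x i).coeff n = 0 := by
        intro i
        by_cases hxi : x i = 0
        · exact ⟨0, fun n _ => by rw [hxi]; rfl⟩
        · exact ⟨(x i).order, fun n hn => HahnSeries.coeff_eq_zero_of_lt_order hn⟩
      choose Bf hBf using hBex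
      haveI : Nonempty (ZMod f) := ⟨0⟩
      set B := Finset.univ.inf' Finset.univ_nonempty Bf with hB
      have chain : ∀ k : ℕ, ∃ (i : ZMod f) (n : ℤ), n ≤ n₀ - k ∧
          (e':ℤ) < ((p:ℤ)-1) * (-n) ∧ (x i).coeff n ≠ 0 := by
        intro k
        induction k with
        | zero => exact ⟨i₀, n₀, by simp, hbig₀, hne₀⟩
        | succ k ih =>
          obtain ⟨i, n, hle, hbig, hne⟩ := ih
          have hn : n < 0 := by nlinarith [Int.natCast_nonneg e', hp2']
          obtain ⟨n', hlt, hbig', hne'⟩ := step i n hn hbig hne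
          exact ⟨i+1, n', by push_cast; push_cast at hle; linarith, hbig', hne'⟩
      obtain ⟨i, n, hle, _, hne⟩ := chain ((n₀ - B).toNat + 1)
      have hnB : n < B := by omega
      exact hne (hBf i n (lt_of_lt_of_le hnB (Finset.inf'_le Bf (Finset.mem_univ i))))
    -- window vanishing from hΘ
    have hwin : ∀ (i : ZMod f) (k : ℕ), k < N →
        (x i).coeff (-(1 + (o i : ℤ) + (k : ℕ) * (m : ℤ))) = 0 := by
      intro i k hk
      have h := congrFun (congrFun hΘ i) ⟨k, hk⟩
      rw [theta_apply, ← hmk i, qc_mk] at h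
      exact h
    -- all negative coefficients vanish
    have hvan : ∀ (i : ZMod f) (n : ℤ), n < 0 → (x i).coeff n = 0 := by
      intro i n hn
      by_cases hA : (e':ℤ) < ((p:ℤ)-1) * (-n)
      · exact claimA i n hn hA
      push_neg at hA
      by_contra hne
      have hcong : ((n : ℤ) : ZMod m) = c i - d i := hsupp i n hn hne
      -- arithmetic of the window
      have hoi : ((o i : ℕ) : ZMod m) = d i - c i - 1 := by
        rw [ho]; simp [ZMod.natCast_val, ZMod.cast_id]
      have hdvd : (m:ℤ) ∣ (-n - (1 + (o i : ℤ))) := by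
        rw [← ZMod.intCast_zmod_eq_zero_iff_dvd]
        push_cast
        rw [hcong, hoi]
        ring
      obtain ⟨t, ht⟩ := hdvd
      have hoilt : (o i : ℤ) < (m : ℤ) := by exact_mod_cast ZMod.val_lt _
      have ht0 : 0 ≤ t := by
        by_contra htneg
        push_neg at htneg
        have hmt : (m:ℤ) * t ≤ (m:ℤ) * (-1) := by
          apply mul_le_mul_of_nonneg_left (by omega) (by positivity)
        linarith
      have he'' : (e':ℤ) = (e:ℤ) * m := by exact_mod_cast he'
      have hjle : -n ≤ (N:ℤ) * m := by
        have hem : (e:ℤ) * m ≤ ((N:ℤ) * ((p:ℤ)-1)) * m :=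
          mul_le_mul_of_nonneg_right heN (Int.natCast_nonneg m)
        have h4 : ((p:ℤ)-1) * (-n) ≤ ((p:ℤ)-1) * ((N:ℤ)*m) := by
          have hrg : ((N:ℤ) * ((p:ℤ)-1)) * m = ((p:ℤ)-1) * ((N:ℤ)*m) := by ring
          linarith
        exact le_of_mul_le_mul_left h4 (by linarith)
      have htN : t < (N:ℤ) := by
        have h1 : (m:ℤ) * t < (m:ℤ) * N := by
          have hcm : (m:ℤ) * N = (N:ℤ) * m := by ring
          linarith
        exact lt_of_mul_lt_mul_left h1 (by positivity)
      have hkN : t.toNat < N := by omega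
      have hdeg : n = -(1 + (o i : ℤ) + (t.toNat : ℕ) * (m : ℤ)) := by
        have h2 : ((t.toNat : ℕ) : ℤ) = t := Int.toNat_of_nonneg ht0
        have hcm : (m:ℤ) * t = t * (m:ℤ) := by ring
        rw [h2]; linarith
      exact hne (by rw [hdeg]; exact hwin i t.toNat hkN)
    funext i
    rw [← hmk i]
    show _ = (0 : LaurentSeries F ⧸ PSsub F)
    rw [Submodule.Quotient.mk_eq_zero]
    exact mem_PSsub_of (hvan i)
  -- conclude by rank comparison
  rw [hspan]
  have hinj : Function.Injective ((theta F f N m o).comp W.subtype) := by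
    rw [← LinearMap.ker_eq_bot]
    rw [LinearMap.ker_eq_bot']
    rintro ⟨μ, hμ⟩ h0
    have : μ = 0 := key μ hμ h0
    exact Subtype.ext this
  have hle := LinearMap.rank_le_of_injective _ hinj
  refine hle.trans ?_
  have hcard : Module.rank F (ZMod f → Fin N → F) = ((N * f : ℕ) : Cardinal) := by
    simp only [rank_pi, rank_fun', Fintype.card_fin, Cardinal.sum_const', Cardinal.mk_fintype,
      ZMod.card, Module.rank_self, mul_one]
    push_cast
    ring
  exact le_of_eq hcard
end
end
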